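/- Let D be the (n-1)×n forward-difference matrix with (Dv)_i = v_{i+1} - v_i and let D⁺ be its Moore-Penrose pseudo-inverse. Then every row of (D⁺)ᵀ has squared Euclidean norm at most n/4. -/

import Mathlib

open Matrix

/-- Forward-difference matrix: `(D v)_i = v_{i+1} - v_i`. -/
def diffMat (n : ℕ) : Matrix (Fin (n - 1)) (Fin n) ℝ :=
  fun i j => if (j : ℕ) = (i : ℕ) + 1 then 1 else if (j : ℕ) = (i : ℕ) then -1 else 0

/-- Moore–Penrose pseudo-inverse of the full-row-rank matrix `D`: `D⁺ = Dᵀ (D Dᵀ)⁻¹`. -/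
noncomputable def diffMatPinv (n : ℕ) : Matrix (Fin n) (Fin (n - 1)) ℝ :=
  (diffMat n)ᵀ * (diffMat n * (diffMat n)ᵀ)⁻¹

/-- Explicit pseudoinverse. -/
noncomputable def Qmat (n : ℕ) : Matrix (Fin n) (Fin (n - 1)) ℝ :=
  fun k j => if (j : ℕ) < (k : ℕ) then ((j : ℝ) + 1) / n else ((j : ℝ) + 1 - n) / n

/-- Explicit inverse of D Dᵀ. -/
noncomputable def Nmat (n : ℕ) : Matrix (Fin (n - 1)) (Fin (n - 1)) ℝ :=
  fun l j => (((min (l : ℕ) (j : ℕ) : ℕ) : ℝ) + 1) * ((n : ℝ) - (((max (l : ℕ) (j : ℕ) : ℕ) : ℝ) + 1)) / n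

-- helper: sum over Fin m of an indicator at a nat value
lemma sum_ite_nat {m : ℕ} (f : Fin m → ℝ) (t : ℕ) :
    ∑ l : Fin m, (if t = (l : ℕ) then f l else 0) =
      if h : t < m then f ⟨t, h⟩ else 0 := by
  split
  · next h =>
    rw [Finset.sum_eq_single (⟨t, h⟩ : Fin m)]
    · simp
    · intro b _ hb
      rw [if_neg]
      intro hc
      exact hb (by simp [Fin.ext_iff, ← hc])
    · simp
  · next h =>
    apply Finset.sum_eq_zero
    intro l _
    rw [if_neg]
    intro hc
    exact h (hc ▸ l.isLt)

lemma diffMat_mul_Q (n : ℕ) (hn : 2 ≤ n) : diffMat n * Qmat n = 1 := by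
  ext i i'
  have hi : (i : ℕ) < n - 1 := i.isLt
  have hi1 : (i : ℕ) + 1 < n := by omega
  have hin : (i : ℕ) < n := by omega
  have hsummand : ∀ k : Fin n, diffMat n i k * Qmat n k i' =
      (if ((i : ℕ) + 1) = (k : ℕ) then Qmat n k i' else 0) +
      (if ((i : ℕ)) = (k : ℕ) then -(Qmat n k i') else 0) := by
    intro k
    simp only [diffMat]
    split_ifs <;> first | ring1 | (exfalso; omega)
  rw [Matrix.mul_apply]
  simp only [hsummand]
  rw [Finset.sum_add_distrib, sum_ite_nat, sum_ite_nat, dif_pos hi1, dif_pos hin]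
  have hn0 : (n : ℝ) ≠ 0 := by positivity
  simp only [Qmat, Matrix.one_apply]
  by_cases h : i = i'
  · subst h
    rw [if_pos rfl, if_pos (by omega : (i : ℕ) < (i : ℕ) + 1), if_neg (by omega : ¬ (i : ℕ) < (i : ℕ))]
    field_simp
    ring
  · have hne : (i : ℕ) ≠ (i' : ℕ) := fun hc => h (Fin.ext hc)
    rw [if_neg h]
    by_cases hlt : (i' : ℕ) < (i : ℕ)
    · rw [if_pos (by omega : (i' : ℕ) < (i : ℕ) + 1), if_pos hlt]; ring
    · rw [if_neg (by omega : ¬ (i' : ℕ) < (i : ℕ) + 1), if_neg hlt]; ring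

lemma sum_ite_nat_succ {m : ℕ} (f : Fin m → ℝ) (t : ℕ) :
    ∑ l : Fin m, (if t = (l : ℕ) + 1 then f l else 0) =
      if h : t - 1 < m ∧ 1 ≤ t then f ⟨t - 1, h.1⟩ else 0 := by
  have : ∀ l : Fin m, (if t = (l : ℕ) + 1 then f l else 0) =
      (if 1 ≤ t then (if t - 1 = (l : ℕ) then f l else 0) else 0) := by
    intro l
    split_ifs <;> first | rfl | (exfalso; omega) | (congr 1; exact Fin.ext (by omega)) | omega
  by_cases h1 : 1 ≤ t
  · simp only [this, if_pos h1]
    rw [sum_ite_nat]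
    by_cases h2 : t - 1 < m
    · rw [dif_pos h2, dif_pos ⟨h2, h1⟩]
    · rw [dif_neg h2, dif_neg (by tauto)]
  · simp only [this, if_neg h1]
    rw [dif_neg (by omega), Finset.sum_const, smul_zero]

lemma diffMatT_mul_N (n : ℕ) (hn : 2 ≤ n) : (diffMat n)ᵀ * Nmat n = Qmat n := by
  have hn0 : (n : ℝ) ≠ 0 := by positivity
  ext k j
  have hj : (j : ℕ) < n - 1 := j.isLt
  have hkn : (k : ℕ) < n := k.isLt
  have hsummand : ∀ l : Fin (n - 1), (diffMat n)ᵀ k l * Nmat n l j =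
      (if (k : ℕ) = (l : ℕ) + 1 then Nmat n l j else 0) +
      (if (k : ℕ) = (l : ℕ) then -(Nmat n l j) else 0) := by
    intro l
    simp only [diffMat, Matrix.transpose_apply]
    split_ifs <;> first | ring1 | (exfalso; omega)
  rw [Matrix.mul_apply]
  simp only [hsummand]
  rw [Finset.sum_add_distrib, sum_ite_nat_succ, sum_ite_nat]
  simp only [Nmat, Qmat]
  by_cases hk0 : (k : ℕ) = 0
  · rw [dif_neg (by omega), dif_pos (by omega : (k : ℕ) < n - 1)]
    rw [if_neg (by omega : ¬ (j : ℕ) < (k : ℕ))]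
    have h1 : min (k : ℕ) (j : ℕ) = (k : ℕ) := by omega
    have h2 : max (k : ℕ) (j : ℕ) = (j : ℕ) := by omega
    rw [h1, h2, hk0]
    push_cast
    field_simp
    ring
  · have hk1 : 1 ≤ (k : ℕ) := by omega
    rw [dif_pos ⟨by omega, hk1⟩]
    by_cases hklast : (k : ℕ) < n - 1
    · rw [dif_pos hklast]
      by_cases hjk : (j : ℕ) < (k : ℕ)
      · rw [if_pos hjk]
        have h1 : min ((k : ℕ) - 1) (j : ℕ) = (j : ℕ) := by omega
        have h2 : max ((k : ℕ) - 1) (j : ℕ) = (k : ℕ) - 1 := by omega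
        have h3 : min (k : ℕ) (j : ℕ) = (j : ℕ) := by omega
        have h4 : max (k : ℕ) (j : ℕ) = (k : ℕ) := by omega
        rw [h1, h2, h3, h4]
        rw [Nat.cast_sub hk1]
        push_cast
        field_simp
        ring
      · rw [if_neg hjk]
        have h1 : min ((k : ℕ) - 1) (j : ℕ) = (k : ℕ) - 1 := by omega
        have h2 : max ((k : ℕ) - 1) (j : ℕ) = (j : ℕ) := by omega
        have h3 : min (k : ℕ) (j : ℕ) = (k : ℕ) := by omega
        have h4 : max (k : ℕ) (j : ℕ) = (j : ℕ) := by omega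
        rw [h1, h2, h3, h4]
        rw [Nat.cast_sub hk1]
        push_cast
        field_simp
        ring
    · rw [dif_neg hklast]
      have hkval : (k : ℕ) = n - 1 := by omega
      rw [if_pos (by omega : (j : ℕ) < (k : ℕ))]
      have h1 : min ((k : ℕ) - 1) (j : ℕ) = (j : ℕ) := by omega
      have h2 : max ((k : ℕ) - 1) (j : ℕ) = (k : ℕ) - 1 := by omega
      rw [h1, h2, hkval]
      have : ((n - 1 - 1 : ℕ) : ℝ) = (n : ℝ) - 2 := by
        rw [Nat.cast_sub (by omega), Nat.cast_sub (by omega)]; push_cast; ring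
      rw [this]
      field_simp
      ring

lemma diffMatPinv_eq_Q (n : ℕ) (hn : 2 ≤ n) : diffMatPinv n = Qmat n := by
  have hMN : (diffMat n * (diffMat n)ᵀ) * Nmat n = 1 := by
    rw [Matrix.mul_assoc, diffMatT_mul_N n hn, diffMat_mul_Q n hn]
  have hinv : (diffMat n * (diffMat n)ᵀ)⁻¹ = Nmat n := Matrix.inv_eq_right_inv hMN
  rw [diffMatPinv, hinv, diffMatT_mul_N n hn]

theorem diffMat_pinv_transpose_row_norm (n : ℕ) (hn : 2 ≤ n) (j : Fin (n - 1)) :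
    ∑ k : Fin n, ((diffMatPinv n)ᵀ j k) ^ 2 ≤ (n : ℝ) / 4 := by
  have hnpos : (0 : ℝ) < n := by positivity
  have hj : (j : ℕ) < n - 1 := j.isLt
  set a : ℝ := (((j : ℕ) : ℝ) + 1) / n with ha
  set b : ℝ := (((j : ℕ) : ℝ) + 1 - n) / n with hb
  have hsum : ∑ k : Fin n, ((diffMatPinv n)ᵀ j k) ^ 2 =
      ∑ k ∈ Finset.range n, (if (j : ℕ) < k then a ^ 2 else b ^ 2) := by
    rw [← Fin.sum_univ_eq_sum_range]
    apply Finset.sum_congr rfl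
    intro k _
    rw [diffMatPinv_eq_Q n hn]
    simp only [Matrix.transpose_apply, Qmat]
    split_ifs <;> rfl
  rw [hsum]
  rw [Finset.range_eq_Ico, ← Finset.sum_Ico_consecutive _ (Nat.zero_le ((j : ℕ) + 1)) (by omega : (j : ℕ) + 1 ≤ n)]
  have h1 : ∑ k ∈ Finset.Ico 0 ((j : ℕ) + 1), (if (j : ℕ) < k then a ^ 2 else b ^ 2)
      = ((j : ℕ) + 1 : ℕ) * b ^ 2 := by
    rw [Finset.sum_congr rfl (fun k hk => if_neg (by simp at hk; omega))]
    rw [Finset.sum_const, Nat.card_Ico, nsmul_eq_mul]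
    norm_num
  have h2 : ∑ k ∈ Finset.Ico ((j : ℕ) + 1) n, (if (j : ℕ) < k then a ^ 2 else b ^ 2)
      = ((n - ((j : ℕ) + 1) : ℕ) : ℝ) * a ^ 2 := by
    rw [Finset.sum_congr rfl (fun k hk => if_pos (by simp at hk; omega))]
    rw [Finset.sum_const, Nat.card_Ico, nsmul_eq_mul]
  rw [h1, h2]
  have hc1 : (((j : ℕ) + 1 : ℕ) : ℝ) = ((j : ℕ) : ℝ) + 1 := by push_cast; ring
  have hc2 : ((n - ((j : ℕ) + 1) : ℕ) : ℝ) = (n : ℝ) - (((j : ℕ) : ℝ) + 1) := by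
    rw [Nat.cast_sub (by omega)]; push_cast; ring
  rw [hc1, hc2, ha, hb]
  set x : ℝ := ((j : ℕ) : ℝ) + 1 with hx
  have hx1 : 1 ≤ x := by simp [hx]
  have hx2 : x ≤ (n : ℝ) - 1 := by
    rw [hx]
    have : ((j : ℕ) : ℝ) ≤ ((n - 2 : ℕ) : ℝ) := Nat.cast_le.mpr (by omega)
    rw [Nat.cast_sub (by omega)] at this
    push_cast at this
    linarith
  have key : x * ((x - n) / n) ^ 2 + ((n : ℝ) - x) * (x / n) ^ 2 = x * ((n : ℝ) - x) / n := by
    field_simp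
    ring
  rw [key, div_le_div_iff₀ hnpos (by norm_num : (0:ℝ) < 4)]
  nlinarith [sq_nonneg ((n : ℝ) - 2 * x)]
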